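/- Let R be a commutative ring, M a finitely generated projective R-module, x ∈ R a non-zero-divisor, G a subgroup scheme of GL_M, and suppose there exists an isomorphism i: (M ⊗ R[1/x], (t_α)) ≅ (M₁ ⊗ R[1/x], (v_α)) of modules with tensors over R[1/x]. Then there exists an isomorphism (M, (t_α)) ≅ (M₁, (v_α)) over R if and only if there exists an element h ∈ G(R[1/x]) that maps the R-submodule i^{-1}(M₁) of M ⊗ R[1/x] onto M. -/

import Mathlib

open scoped TensorProduct

/-- The graded piece `N^{⊗ s} ⊗ N^{* ⊗ t}` of the essential tensor algebra of a module. -/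
abbrev TensorPiece (A : Type*) [CommRing A] (N : Type*) [AddCommGroup N] [Module A N]
    (st : ℕ × ℕ) : Type _ :=
  (⨂[A] (_ : Fin st.1), N) ⊗[A] (⨂[A] (_ : Fin st.2), Module.Dual A N)

/-- The equivalence induced on a graded piece of the essential tensor algebra by a linear
isomorphism. -/
noncomputable def tensorPieceCongr {A : Type*} [CommRing A]
    {M N : Type*} [AddCommGroup M] [Module A M] [AddCommGroup N] [Module A N]
    (e : M ≃ₗ[A] N) (st : ℕ × ℕ) :
    TensorPiece A M st ≃ₗ[A] TensorPiece A N st :=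
  TensorProduct.congr (PiTensorProduct.congr fun _ => e)
    (PiTensorProduct.congr fun _ => e.symm.dualMap)

lemma tensorPieceCongr_trans {A : Type*} [CommRing A]
    {M N P : Type*} [AddCommGroup M] [Module A M] [AddCommGroup N] [Module A N]
    [AddCommGroup P] [Module A P]
    (e : M ≃ₗ[A] N) (f : N ≃ₗ[A] P) (st : ℕ × ℕ) :
    tensorPieceCongr (e.trans f) st = (tensorPieceCongr e st).trans (tensorPieceCongr f st) := by
  apply LinearEquiv.toLinearMap_injective
  ext mx my
  simp [tensorPieceCongr]
  rfl

lemma tensorPieceCongr_refl {A : Type*} [CommRing A]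
    {M : Type*} [AddCommGroup M] [Module A M] (st : ℕ × ℕ) :
    tensorPieceCongr (LinearEquiv.refl A M) st = LinearEquiv.refl A _ := by
  apply LinearEquiv.toLinearMap_injective
  ext mx my
  simp [tensorPieceCongr]

lemma tensorPieceCongr_symm_apply {A : Type*} [CommRing A]
    {M N : Type*} [AddCommGroup M] [Module A M] [AddCommGroup N] [Module A N]
    (e : M ≃ₗ[A] N) (st : ℕ × ℕ) (z : TensorPiece A N st) :
    tensorPieceCongr e.symm st z = (tensorPieceCongr e st).symm z := by
  apply (tensorPieceCongr e st).injective
  rw [LinearEquiv.apply_symm_apply, ← LinearEquiv.trans_apply, ← tensorPieceCongr_trans,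
    LinearEquiv.symm_trans_self, tensorPieceCongr_refl, LinearEquiv.refl_apply]

/-- A localization map away from a non-zero-divisor is injective on a projective module. -/
lemma localization_injective_of_projective
    {R : Type*} [CommRing R] {x : R} (hx : x ∈ nonZeroDivisors R)
    {M MA : Type*} [AddCommGroup M] [Module R M] [AddCommGroup MA] [Module R MA]
    [Module.Projective R M]
    (ι : M →ₗ[R] MA) [IsLocalizedModule (Submonoid.powers x) ι] :
    Function.Injective ι := by
  intro a b hab
  have hz : ι (a - b) = 0 := by rw [map_sub, hab, sub_self]
  obtain ⟨s, hs⟩ := (IsLocalizedModule.eq_zero_iff (Submonoid.powers x) ι).mp hz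
  have hsnzd : (s : R) ∈ nonZeroDivisors R := by
    obtain ⟨n, hn⟩ := s.2
    rw [← hn]
    exact pow_mem hx n
  obtain ⟨σ, hσ⟩ := Module.projective_def.mp ‹Module.Projective R M›
  have hσ0 : σ (a - b) = 0 := by
    have h1 : (s : R) • σ (a - b) = 0 := by
      rw [← map_smul, ← Submonoid.smul_def, hs, map_zero]
    ext c
    have h2 := congrFun (congrArg DFunLike.coe h1) c
    simp only [Finsupp.smul_apply, smul_eq_mul, Finsupp.coe_zero, Pi.zero_apply] at h2
    exact hsnzd.2 _ (by rw [mul_comm]; exact h2)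
  have : a - b = 0 := by
    have := hσ (a - b)
    rw [hσ0, map_zero] at this
    exact this.symm
  exact sub_eq_zero.mp this

/-- Fact 2.5.1 (b): given an isomorphism `i : (M ⊗ R[1/x], (t_α)) ≅ (M₁ ⊗ R[1/x], (v_α))`,
there exists an isomorphism `(M, (t_α)) ≅ (M₁, (v_α))` over `R` if and only if there is an
element `h` of `G(R[1/x])` (an automorphism of `M ⊗ R[1/x]` fixing all the `t_α`) mapping the
`R`-submodule `i⁻¹(M₁)` of `M ⊗ R[1/x]` onto `M`. -/
theorem tensor_iso_iff_group_element
    {R : Type*} [CommRing R] (x : R) (hx : x ∈ nonZeroDivisors R)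
    (A : Type*) [CommRing A] [Algebra R A] [IsLocalization.Away x A]
    (M M₁ : Type*) [AddCommGroup M] [Module R M] [AddCommGroup M₁] [Module R M₁]
    [Module.Finite R M] [Module.Projective R M]
    [Module.Finite R M₁] [Module.Projective R M₁]
    (MA M₁A : Type*) [AddCommGroup MA] [Module A MA] [AddCommGroup M₁A] [Module A M₁A]
    [Module R MA] [IsScalarTower R A MA] [Module R M₁A] [IsScalarTower R A M₁A]
    (ι : M →ₗ[R] MA) (ι₁ : M₁ →ₗ[R] M₁A)
    [IsLocalizedModule (Submonoid.powers x) ι] [IsLocalizedModule (Submonoid.powers x) ι₁]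
    {J : Type*} (d : J → ℕ × ℕ)
    (t : (α : J) → TensorPiece A MA (d α))
    (i : MA ≃ₗ[A] M₁A)
    (v : (α : J) → TensorPiece A M₁A (d α))
    (hv : ∀ α, tensorPieceCongr i (d α) (t α) = v α) :
    (∃ (ρ : M ≃ₗ[R] M₁) (ρA : MA ≃ₗ[A] M₁A),
        (∀ mm : M, ρA (ι mm) = ι₁ (ρ mm)) ∧
        ∀ α, tensorPieceCongr ρA (d α) (t α) = v α) ↔
    (∃ h : MA ≃ₗ[A] MA,
        (∀ α, tensorPieceCongr h (d α) (t α) = t α) ∧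
        Submodule.map (h.toLinearMap.restrictScalars R)
          (Submodule.map (i.symm.toLinearMap.restrictScalars R) (LinearMap.range ι₁)) =
          LinearMap.range ι) := by
  constructor
  · rintro ⟨ρ, ρA, hcomp, htensor⟩
    refine ⟨i.trans ρA.symm, ?_, ?_⟩
    · intro α
      rw [tensorPieceCongr_trans, LinearEquiv.trans_apply, hv α, ← htensor α,
        tensorPieceCongr_symm_apply, LinearEquiv.symm_apply_apply]
    · have key : ∀ m₁ : M₁, ρA.symm (ι₁ m₁) = ι (ρ.symm m₁) := by
        intro m₁
        apply ρA.injective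
        rw [LinearEquiv.apply_symm_apply, hcomp, LinearEquiv.apply_symm_apply]
      ext y
      simp only [Submodule.mem_map, LinearMap.mem_range, LinearMap.coe_restrictScalars,
        LinearEquiv.coe_coe]
      constructor
      · rintro ⟨z, ⟨w, ⟨m₁, rfl⟩, rfl⟩, rfl⟩
        exact ⟨ρ.symm m₁, by
          rw [LinearEquiv.trans_apply, LinearEquiv.apply_symm_apply, key]⟩
      · rintro ⟨m, rfl⟩
        refine ⟨i.symm (ι₁ (ρ m)), ⟨ι₁ (ρ m), ⟨ρ m, rfl⟩, rfl⟩, ?_⟩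
        rw [LinearEquiv.trans_apply, LinearEquiv.apply_symm_apply, ← hcomp,
          LinearEquiv.symm_apply_apply]
  · rintro ⟨h, ht, hmap⟩
    have hι : Function.Injective ι := localization_injective_of_projective hx ι
    have hι₁ : Function.Injective ι₁ := localization_injective_of_projective hx ι₁
    set ρA : MA ≃ₗ[A] M₁A := h.symm.trans i with hρA
    have hmem : ∀ z : MA, z ∈ LinearMap.range ι ↔ ∃ m₁ : M₁, h (i.symm (ι₁ m₁)) = z := by
      intro z
      rw [← hmap]
      simp only [Submodule.mem_map, LinearMap.mem_range, LinearMap.coe_restrictScalars,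
        LinearEquiv.coe_coe]
      constructor
      · rintro ⟨w, ⟨u, ⟨m₁, rfl⟩, rfl⟩, rfl⟩
        exact ⟨m₁, rfl⟩
      · rintro ⟨m₁, rfl⟩
        exact ⟨i.symm (ι₁ m₁), ⟨ι₁ m₁, ⟨m₁, rfl⟩, rfl⟩, rfl⟩
    have hmap' : Submodule.map ((ρA.restrictScalars R : MA ≃ₗ[R] M₁A) : MA →ₗ[R] M₁A)
        (LinearMap.range ι) = LinearMap.range ι₁ := by
      ext y
      simp only [Submodule.mem_map, LinearMap.mem_range, LinearEquiv.coe_coe,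
        LinearEquiv.restrictScalars_apply]
      constructor
      · rintro ⟨z, hz, rfl⟩
        obtain ⟨m₁, rfl⟩ := (hmem z).mp hz
        refine ⟨m₁, ?_⟩
        rw [hρA, LinearEquiv.trans_apply, LinearEquiv.symm_apply_apply,
          LinearEquiv.apply_symm_apply]
      · rintro ⟨m₁, rfl⟩
        refine ⟨h (i.symm (ι₁ m₁)), (hmem _).mpr ⟨m₁, rfl⟩, ?_⟩
        rw [hρA, LinearEquiv.trans_apply, LinearEquiv.symm_apply_apply,
          LinearEquiv.apply_symm_apply]
    set e₀ := (ρA.restrictScalars R).ofSubmodules (LinearMap.range ι) (LinearMap.range ι₁) hmap'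
    set ρ : M ≃ₗ[R] M₁ :=
      (LinearEquiv.ofInjective ι hι).trans (e₀.trans (LinearEquiv.ofInjective ι₁ hι₁).symm)
    refine ⟨ρ, ρA, ?_, ?_⟩
    · intro m
      have h1 : ι₁ (ρ m) = (LinearEquiv.ofInjective ι₁ hι₁ (ρ m) : M₁A) := by
        rw [LinearEquiv.ofInjective_apply]
      rw [h1]
      show _ = ((LinearEquiv.ofInjective ι₁ hι₁)
        ((LinearEquiv.ofInjective ι₁ hι₁).symm (e₀ (LinearEquiv.ofInjective ι hι m))) : M₁A)
      rw [LinearEquiv.apply_symm_apply, LinearEquiv.ofSubmodules_apply]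
      simp only [LinearEquiv.restrictScalars_apply, LinearEquiv.ofInjective_apply]
    · intro α
      have h1 : tensorPieceCongr h.symm (d α) (t α) = t α := by
        conv_lhs => rw [← ht α]
        rw [← LinearEquiv.trans_apply, ← tensorPieceCongr_trans, LinearEquiv.self_trans_symm,
          tensorPieceCongr_refl, LinearEquiv.refl_apply]
      rw [hρA, tensorPieceCongr_trans, LinearEquiv.trans_apply, h1, hv α]
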